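/- arXiv:math/9810089 — 2 statements merged into one kernel-verified Lean document; each statement's English description precedes it below -/
import Mathlib

section
/- If G = ⟨g₁, …, g_N⟩ is a rational semigroup generated by finitely many nonconstant rational maps, then J(G) = ⋃_{i=1}^N g_i⁻¹(J(G)) and N(G) = ⋂_{i=1}^N g_i⁻¹(N(G)). -/
open OnePoint Filter Topology Set

noncomputable section

/-- The Riemann sphere as the one-point compactification of `ℂ`. -/
abbrev Sphere := OnePoint ℂ

/-- The spherical (chordal) metric on the Riemann sphere. -/
noncomputable def sm : Sphere → Sphere → ℝ
  | OnePoint.some z, OnePoint.some w =>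
      2 * ‖z - w‖ / Real.sqrt ((1 + ‖z‖ ^ 2) * (1 + ‖w‖ ^ 2))
  | OnePoint.some z, ∞ => 2 / Real.sqrt (1 + ‖z‖ ^ 2)
  | ∞, OnePoint.some w => 2 / Real.sqrt (1 + ‖w‖ ^ 2)
  | ∞, ∞ => 0

/-- Spherical diameter of a set. -/
noncomputable def sdiam (S : Set Sphere) : ℝ :=
  sSup {d : ℝ | ∃ z ∈ S, ∃ w ∈ S, d = sm z w}

/-- `f` is a rational map on the Riemann sphere: it is continuous and is given by a
quotient of polynomials away from the zeros of the denominator. -/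
def IsRationalMap (f : Sphere → Sphere) : Prop :=
  Continuous f ∧ ∃ p q : Polynomial ℂ, q ≠ 0 ∧
    ∀ z : ℂ, q.eval z ≠ 0 → f (OnePoint.some z) = OnePoint.some (p.eval z / q.eval z)

/-- `f` is a rational map of degree at least two. -/
def IsRationalMapDegGe2 (f : Sphere → Sphere) : Prop :=
  Continuous f ∧ ∃ p q : Polynomial ℂ, q ≠ 0 ∧ IsCoprime p q ∧
    2 ≤ max p.natDegree q.natDegree ∧
    ∀ z : ℂ, q.eval z ≠ 0 → f (OnePoint.some z) = OnePoint.some (p.eval z / q.eval z)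

/-- `f` is a Möbius transformation `z ↦ (az+b)/(cz+d)`, `ad - bc ≠ 0`. -/
def IsMoebius (f : Sphere → Sphere) : Prop :=
  Continuous f ∧ ∃ a b c d : ℂ, a * d - b * c ≠ 0 ∧
    ∀ z : ℂ, c * z + d ≠ 0 → f (OnePoint.some z) = OnePoint.some ((a * z + b) / (c * z + d))

/-- `f` is a nonconstant function. -/
def Nonconst (f : Sphere → Sphere) : Prop := ∃ z w : Sphere, f z ≠ f w

/-- `G` is a rational semigroup: a set of nonconstant rational maps closed under composition. -/
structure IsRatSemigroup (G : Set (Sphere → Sphere)) : Prop where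
  comp_mem : ∀ f ∈ G, ∀ g ∈ G, (f ∘ g) ∈ G
  rat : ∀ f ∈ G, IsRationalMap f
  noncst : ∀ f ∈ G, Nonconst f

/-- The semigroup (under composition) generated by a set of self-maps. -/
inductive semigroupGen {α : Type*} (S : Set (α → α)) : (α → α) → Prop
  | base : ∀ f ∈ S, semigroupGen S f
  | comp : ∀ f g, semigroupGen S f → semigroupGen S g → semigroupGen S (f ∘ g)

/-- The group (under composition) generated by a set of self-maps. -/
inductive groupGen {α : Type*} (S : Set (α → α)) : (α → α) → Prop
  | base : ∀ f ∈ S, groupGen S f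
  | inv : ∀ f g, groupGen S f → f ∘ g = id → g ∘ f = id → groupGen S g
  | comp : ∀ f g, groupGen S f → groupGen S g → groupGen S (f ∘ g)

/-- The family `G` is normal on the open set `U`: every sequence in `G` has a subsequence
converging uniformly on compact subsets of `U` with respect to the spherical metric. -/
def NormalOn (G : Set (Sphere → Sphere)) (U : Set Sphere) : Prop :=
  ∀ F : ℕ → (Sphere → Sphere), (∀ n, F n ∈ G) →
    ∃ φ : ℕ → ℕ, StrictMono φ ∧ ∃ g : Sphere → Sphere,
      ∀ K ⊆ U, IsCompact K → ∀ ε > 0, ∃ N : ℕ, ∀ n ≥ N, ∀ z ∈ K, sm (F (φ n) z) (g z) < ε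

/-- The set of normality (Fatou set) of `G`. -/
def Fatou (G : Set (Sphere → Sphere)) : Set Sphere :=
  {z | ∃ U : Set Sphere, IsOpen U ∧ z ∈ U ∧ NormalOn G U}

/-- The Julia set of `G`. -/
def Julia (G : Set (Sphere → Sphere)) : Set Sphere := (Fatou G)ᶜ

/-- The Julia set of a single map: the Julia set of the cyclic semigroup it generates. -/
def Julia1 (f : Sphere → Sphere) : Set Sphere := Julia {g | semigroupGen {f} g}

/-- The Fatou set of a single map. -/
def Fatou1 (f : Sphere → Sphere) : Set Sphere := Fatou {g | semigroupGen {f} g}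

/-- `G` is non-elementary: its Julia set has at least three points. -/
def NonElementary (G : Set (Sphere → Sphere)) : Prop :=
  ∃ a b c : Sphere, a ∈ Julia G ∧ b ∈ Julia G ∧ c ∈ Julia G ∧ a ≠ b ∧ a ≠ c ∧ b ≠ c

/-- `w` is a fixed point of `g` with `|multiplier| = lam` (measured via the spherical metric;
at a fixed point this agrees with the chart multiplier). -/
def FixedPtWithMultiplier (g : Sphere → Sphere) (w : Sphere) (lam : ℝ) : Prop :=
  g w = w ∧ Tendsto (fun z => sm (g z) w / sm z w) (𝓝[≠] w) (𝓝 lam)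

/-- `w` is a repelling fixed point of `g`. -/
def RepellingFixedPt (g : Sphere → Sphere) (w : Sphere) : Prop :=
  ∃ lam : ℝ, 1 < lam ∧ FixedPtWithMultiplier g w lam

/-- `w` is an attracting (or superattracting) fixed point of `g`. -/
def AttractingFixedPt (g : Sphere → Sphere) (w : Sphere) : Prop :=
  ∃ lam : ℝ, lam < 1 ∧ FixedPtWithMultiplier g w lam

/-- `w` is a superattracting fixed point of `g` (multiplier `0`). -/
def SuperAttractingFixedPt (g : Sphere → Sphere) (w : Sphere) : Prop :=
  FixedPtWithMultiplier g w 0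

/-- `f` is a loxodromic Möbius map: a Möbius map with an attracting and a repelling
fixed point. -/
def IsLoxodromic (f : Sphere → Sphere) : Prop :=
  IsMoebius f ∧ ∃ p q : Sphere, p ≠ q ∧ AttractingFixedPt f p ∧ RepellingFixedPt f q

/-- The exceptional set of a rational map of degree at least two: the points with
backward orbit containing at most two points. -/
def ExcSet (f : Sphere → Sphere) : Set Sphere :=
  {z | ∃ a b : Sphere, {w | ∃ n : ℕ, 1 ≤ n ∧ f^[n] w = z} ⊆ {a, b}}

/-- The finite chart on the sphere (junk value `0` at `∞`). -/
def down : Sphere → ℂ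
  | OnePoint.some z => z
  | ∞ => 0

/-- The map `z ↦ 1/z` on the Riemann sphere. -/
def invS : Sphere → Sphere
  | OnePoint.some z => if z = 0 then ∞ else OnePoint.some z⁻¹
  | ∞ => OnePoint.some 0

/-- `f` is holomorphic at `p` as a self-map of the Riemann sphere (in charts). -/
def SphHoloAt (f : Sphere → Sphere) (p : Sphere) : Prop :=
  ContinuousAt f p ∧
    ((p ≠ ∞ → f p ≠ ∞ → DifferentiableAt ℂ (fun w : ℂ => down (f (OnePoint.some w))) (down p)) ∧
     (p ≠ ∞ → f p = ∞ → DifferentiableAt ℂ (fun w : ℂ => down (invS (f (OnePoint.some w)))) (down p)) ∧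
     (p = ∞ → f p ≠ ∞ → DifferentiableAt ℂ (fun w : ℂ => down (f (invS (OnePoint.some w)))) 0) ∧
     (p = ∞ → f p = ∞ → DifferentiableAt ℂ (fun w : ℂ => down (invS (f (invS (OnePoint.some w))))) 0))

/-- `f` maps `A` conformally (holomorphically and bijectively) onto `B`. -/
def ConformalBijOn (f : Sphere → Sphere) (A B : Set Sphere) : Prop :=
  Set.BijOn f A B ∧ ∀ z ∈ A, SphHoloAt f z

/-- The genuine round annulus `{r₁ < |z| < r₂}`, viewed in the sphere. -/
def roundAnn (r₁ r₂ : ℝ) : Set Sphere :=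
  {z | ∃ w : ℂ, z = OnePoint.some w ∧ r₁ < ‖w‖ ∧ ‖w‖ < r₂}

/-- `A` is a conformal annulus of modulus `m`: an open set conformally equivalent to a
round annulus `{r₁ < |z| < r₂}` with `m = (1/2π) log (r₂/r₁)`. -/
def IsConfAnnulusWithMod (A : Set Sphere) (m : ℝ) : Prop :=
  IsOpen A ∧ ∃ r₁ r₂ : ℝ, 0 < r₁ ∧ r₁ < r₂ ∧
    m = (2 * Real.pi)⁻¹ * Real.log (r₂ / r₁) ∧
    ∃ φ : Sphere → Sphere, ConformalBijOn φ A (roundAnn r₁ r₂)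

/-- The annulus `A` separates the set `F`: `F` misses `A` and meets at least two
connected components of the complement of `A`. -/
def Separates (A F : Set Sphere) : Prop :=
  F ∩ A = ∅ ∧ ∃ x ∈ F, ∃ y ∈ F,
    connectedComponentIn Aᶜ x ≠ connectedComponentIn Aᶜ y

/-- `F` is uniformly perfect: it has at least two points and there is a uniform upper
bound on the moduli of conformal annuli separating `F`. -/
def UniformlyPerfect (F : Set Sphere) : Prop :=
  F.Nontrivial ∧ ∃ B : ℝ, ∀ A : Set Sphere, ∀ m : ℝ,
    IsConfAnnulusWithMod A m → Separates A F → m ≤ B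

/-- A uniform Lipschitz bound (w.r.t. the spherical metric) for a family of maps. -/
def LipBddBy (S : Set (Sphere → Sphere)) (C : ℝ) : Prop :=
  ∀ f ∈ S, ∀ z w : Sphere, sm (f z) (f w) ≤ C * sm z w

/-- The group `G` acts properly discontinuously at some point of the sphere. -/
def ProperlyDiscontinuousSomewhere (G : Set (Sphere → Sphere)) : Prop :=
  ∃ z₀ : Sphere, ∃ U : Set Sphere, IsOpen U ∧ z₀ ∈ U ∧
    {f | f ∈ G ∧ (f '' U ∩ U).Nonempty}.Finite

/-- `G` is a Kleinian group: a group of Möbius maps acting properly discontinuously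
at some point. -/
def IsKleinian (G : Set (Sphere → Sphere)) : Prop :=
  (∀ f ∈ G, IsMoebius f) ∧ id ∈ G ∧
    (∀ f ∈ G, ∀ g ∈ G, (f ∘ g) ∈ G) ∧
    (∀ f ∈ G, ∃ g ∈ G, f ∘ g = id ∧ g ∘ f = id) ∧
    ProperlyDiscontinuousSomewhere G

end
section Helpers

open Polynomial Metric Bornology

lemma sm_self (x : Sphere) : sm x x = 0 := by
  cases x <;> simp [sm]

lemma nbot (T : Set ℂ) (hT : T.Finite) (a : ℂ) : (𝓝[Tᶜ] a).NeBot := by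
  have h1 : (T \ {a})ᶜ ∈ 𝓝 a :=
    ((hT.subset Set.diff_subset).isClosed.isOpen_compl).mem_nhds (by simp)
  have h2 : 𝓝[{a}ᶜ ∩ (T \ {a})ᶜ] a = 𝓝[{a}ᶜ] a :=
    nhdsWithin_inter_of_mem' (mem_nhdsWithin_of_mem_nhds h1)
  have h3 : ({a}ᶜ ∩ (T \ {a})ᶜ : Set ℂ) ⊆ Tᶜ := by
    intro x ⟨hx1, hx2⟩ hxT
    exact hx2 ⟨hxT, hx1⟩
  have : (𝓝[{a}ᶜ ∩ (T \ {a})ᶜ] a).NeBot := by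
    rw [h2]; exact NormedField.nhdsNE_neBot a
  exact this.mono (nhdsWithin_mono _ h3)

lemma dense_compl_finite (T : Set ℂ) (hT : T.Finite) : Dense (Tᶜ : Set ℂ) := by
  intro x
  rw [mem_closure_iff_nhdsWithin_neBot]
  exact nbot T hT x

lemma dense_sphere (T : Set ℂ) (hT : T.Finite) :
    Dense (OnePoint.some '' Tᶜ : Set Sphere) :=
  OnePoint.denseRange_coe.dense_image OnePoint.continuous_coe (dense_compl_finite T hT)

lemma infinite_of_nhdsWithin (a : ℂ) (S : Set ℂ) (h : S ∈ 𝓝[≠] a) : S.Infinite := by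
  intro hfin
  have h1 : (𝓝[S \ {a}] a).NeBot := by
    have : 𝓝[S ∩ {a}ᶜ] a = 𝓝[{a}ᶜ] a := nhdsWithin_inter_of_mem h
    have hne : (𝓝[S ∩ {a}ᶜ] a).NeBot := by rw [this]; exact NormedField.nhdsNE_neBot a
    simpa [Set.diff_eq] using hne
  have h2 : a ∈ closure (S \ {a}) := mem_closure_iff_nhdsWithin_neBot.mpr h1
  rw [IsClosed.closure_eq ((hfin.subset Set.diff_subset).isClosed)] at h2
  exact h2.2 rfl

lemma invS_invS (x : Sphere) : invS (invS x) = x := by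
  induction x using OnePoint.rec with
  | infty => simp [invS]
  | coe z =>
    by_cases hz : z = 0
    · simp [invS, hz]
    · simp [invS, hz, inv_eq_zero]

lemma invS_image (s : Set Sphere) : invS '' s = invS ⁻¹' s := by
  ext x
  constructor
  · rintro ⟨y, hy, rfl⟩
    simpa [Set.mem_preimage, invS_invS] using hy
  · intro hx
    exact ⟨invS x, hx, invS_invS x⟩

lemma continuous_invS : Continuous invS := by
  rw [continuous_iff_continuousAt]
  intro x
  induction x using OnePoint.rec with
  | infty =>
    rw [OnePoint.continuousAt_infty']
    have h0 : Tendsto (fun z : ℂ => (OnePoint.some z⁻¹ : Sphere)) (cobounded ℂ) (𝓝 (OnePoint.some 0)) := by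
      rw [OnePoint.nhds_coe_eq]
      exact Filter.Tendsto.comp tendsto_map tendsto_inv₀_cobounded
    have he : (fun z : ℂ => invS (OnePoint.some z)) =ᶠ[cobounded ℂ] fun z => (OnePoint.some z⁻¹ : Sphere) := by
      filter_upwards [eventually_cobounded_le_norm (1:ℝ)] with z hz
      have : z ≠ 0 := by intro h; rw [h] at hz; norm_num at hz
      simp [invS, this]
    rw [Filter.coclosedCompact_eq_cocompact, ← cobounded_eq_cocompact]
    exact (h0.congr' he.symm : _)
  | coe z =>
    rw [OnePoint.continuousAt_coe]
    by_cases hz : z = 0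
    · subst hz
      have : (invS ∘ fun w : ℂ => (OnePoint.some w : Sphere)) 0 = (∞ : Sphere) := by simp [invS]
      rw [ContinuousAt, this, OnePoint.hasBasis_nhds_infty.tendsto_right_iff]
      rintro K ⟨hKc, hKcpt⟩
      obtain ⟨R, hR⟩ := hKcpt.isBounded.subset_closedBall 0
      have hR' : 0 ≤ R ⊔ 0 := le_sup_right
      set R' := R ⊔ 0 with hR'def
      have hR : K ⊆ Metric.closedBall 0 R' := hR.trans (Metric.closedBall_subset_closedBall le_sup_left)
      have hR0 : 0 < R' + 1 := by linarith
      filter_upwards [Metric.ball_mem_nhds (0:ℂ) (by positivity : (0:ℝ) < (R'+1)⁻¹)] with w hw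
      by_cases hw0 : w = 0
      · simp [Function.comp, invS, hw0]
      · have : invS (OnePoint.some w) = OnePoint.some w⁻¹ := by simp [invS, hw0]
        simp only [Function.comp_apply, this]
        left
        refine ⟨w⁻¹, ?_, rfl⟩
        intro hmem
        have h1 : ‖w⁻¹‖ ≤ R' := by simpa [Complex.dist_eq] using hR hmem
        have h2 : ‖w‖ < (R'+1)⁻¹ := by simpa [Complex.dist_eq] using hw
        have h3 : ‖w‖ ≠ 0 := by simpa using hw0
        have h4 : ‖w⁻¹‖ = ‖w‖⁻¹ := norm_inv w
        have h5 : (R'+1) < ‖w‖⁻¹ := by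
          rw [lt_inv_comm₀ hR0 (lt_of_le_of_ne (norm_nonneg w) (Ne.symm h3))]
          exact h2
        rw [h4] at h1
        linarith
    · have heq : (fun w : ℂ => invS (OnePoint.some w)) =ᶠ[𝓝 z] fun w => (OnePoint.some w⁻¹ : Sphere) := by
        filter_upwards [isOpen_compl_singleton.mem_nhds hz] with w hw
        have hw' : w ≠ 0 := hw
        simp [invS, hw']
      have : ContinuousAt (fun w : ℂ => (OnePoint.some w⁻¹ : Sphere)) z :=
        OnePoint.continuous_coe.continuousAt.comp (continuousAt_inv₀ hz)
      exact (this.congr heq.symm : _)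

end Helpers

section OpenMapping

open Polynomial Metric Bornology

lemma invS_cancel (t : Set Sphere) : invS ⁻¹' (invS '' t) = t := by
  rw [← invS_image, Set.image_image]
  ext y; simp [invS_invS]

lemma invS_cancel' (t : Set Sphere) : invS '' (invS ⁻¹' t) = t := by
  rw [invS_image]
  ext y; simp [Set.mem_preimage, invS_invS]

lemma post_inv {gg : Sphere → Sphere} {x : Sphere}
    (H : ∀ s ∈ 𝓝 x, (invS ∘ gg) '' s ∈ 𝓝 ((invS ∘ gg) x)) :
    ∀ s ∈ 𝓝 x, gg '' s ∈ 𝓝 (gg x) := by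
  intro s hs
  have h2 : invS ⁻¹' ((invS ∘ gg) '' s) ∈ 𝓝 (gg x) :=
    continuous_invS.continuousAt.preimage_mem_nhds (H s hs)
  have h3 : invS ⁻¹' ((invS ∘ gg) '' s) = gg '' s := by
    rw [Set.image_comp, invS_cancel]
  rwa [h3] at h2

lemma pre_inv {gg : Sphere → Sphere} {x : Sphere}
    (H : ∀ s ∈ 𝓝 (invS x), (gg ∘ invS) '' s ∈ 𝓝 ((gg ∘ invS) (invS x))) :
    ∀ s ∈ 𝓝 x, gg '' s ∈ 𝓝 (gg x) := by
  intro s hs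
  have hs' : invS ⁻¹' s ∈ 𝓝 (invS x) := by
    apply continuous_invS.continuousAt.preimage_mem_nhds
    rwa [invS_invS]
  have h1 := H _ hs'
  have h2 : (gg ∘ invS) '' (invS ⁻¹' s) = gg '' s := by
    rw [Set.image_comp, invS_cancel']
  have h3 : (gg ∘ invS) (invS x) = gg x := by simp [invS_invS]
  rw [h2, h3] at h1
  exact h1

lemma localOpen {gg : Sphere → Sphere} (hg : Continuous gg) (a : ℂ) (r : ℝ) (hr : 0 < r)
    (h : ℂ → ℂ) (hh : AnalyticOnNhd ℂ h (Metric.ball a r))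
    (hne : ∀ c : ℂ, ¬ ∀ w ∈ Metric.ball a r, h w = c)
    (hag : ∀ w ∈ Metric.ball a r, w ≠ a → gg (OnePoint.some w) = OnePoint.some (h w)) :
    ∀ s ∈ 𝓝 (OnePoint.some a), gg '' s ∈ 𝓝 (gg (OnePoint.some a)) := by
  have hball : Metric.ball a r ∈ 𝓝 a := Metric.ball_mem_nhds a hr
  have hfil : (𝓝[Metric.ball a r ∩ {a}ᶜ] a).NeBot := by
    rw [nhdsWithin_inter_of_mem (mem_nhdsWithin_of_mem_nhds hball)]
    exact NormedField.nhdsNE_neBot a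
  have hcen : gg (OnePoint.some a) = OnePoint.some (h a) := by
    have t1 : Filter.Tendsto (fun w => gg (OnePoint.some w))
        (𝓝[Metric.ball a r ∩ {a}ᶜ] a) (𝓝 (gg (OnePoint.some a))) :=
      ((hg.comp OnePoint.continuous_coe).continuousAt).tendsto.mono_left nhdsWithin_le_nhds
    have t2 : Filter.Tendsto (fun w => (OnePoint.some (h w) : Sphere))
        (𝓝[Metric.ball a r ∩ {a}ᶜ] a) (𝓝 (OnePoint.some (h a))) := by
      refine Filter.Tendsto.mono_left ?_ nhdsWithin_le_nhds
      exact (OnePoint.continuous_coe.continuousAt.comp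
        (hh a (Metric.mem_ball_self hr)).continuousAt)
    have te : (fun w => gg (OnePoint.some w)) =ᶠ[𝓝[Metric.ball a r ∩ {a}ᶜ] a]
        fun w => (OnePoint.some (h w) : Sphere) := by
      filter_upwards [self_mem_nhdsWithin] with w hw
      exact hag w hw.1 hw.2
    exact tendsto_nhds_unique (t1.congr' te) t2
  intro s hs
  have hsA : OnePoint.some ⁻¹' s ∈ 𝓝 a :=
    OnePoint.continuous_coe.continuousAt.preimage_mem_nhds hs
  obtain ⟨r', hr'0, hr'⟩ := Metric.mem_nhds_iff.mp (Filter.inter_mem hsA hball)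
  have hopen : ∀ t ⊆ Metric.ball a r, IsOpen t → IsOpen (h '' t) := by
    rcases hh.is_constant_or_isOpen (convex_ball a r).isPreconnected with hc | ho
    · obtain ⟨c, hc⟩ := hc
      exact absurd hc (hne c)
    · exact ho
  have h1 : IsOpen (h '' Metric.ball a r') :=
    hopen _ (fun x hx => (hr' hx).2) Metric.isOpen_ball
  have h2 : IsOpen (OnePoint.some '' (h '' Metric.ball a r')) :=
    OnePoint.isOpenEmbedding_coe.isOpenMap _ h1
  have h4 : OnePoint.some '' (h '' Metric.ball a r') ⊆ gg '' s := by
    rintro _ ⟨_, ⟨w, hw, rfl⟩, rfl⟩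
    by_cases hwa : w = a
    · subst hwa
      exact ⟨OnePoint.some w, (hr' hw).1, hcen⟩
    · exact ⟨OnePoint.some w, (hr' hw).1, hag w (hr' hw).2 hwa⟩
  have h3 : gg (OnePoint.some a) ∈ OnePoint.some '' (h '' Metric.ball a r') := by
    rw [hcen]
    exact ⟨h a, ⟨a, Metric.mem_ball_self hr'0, rfl⟩, rfl⟩
  exact Filter.mem_of_superset (h2.mem_nhds h3) h4

lemma ball_diff_infinite (a : ℂ) (r : ℝ) (hr : 0 < r) : (Metric.ball a r \ {a}).Infinite :=
  infinite_of_nhdsWithin a _ (diff_mem_nhdsWithin_compl (Metric.ball_mem_nhds a hr) _)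

lemma poly_eq_of_eqon {p q : ℂ[X]} (S : Set ℂ) (hS : S.Infinite)
    (h : ∀ z ∈ S, p.eval z = q.eval z) : p = q := by
  have h0 : p - q = 0 := by
    apply Polynomial.eq_zero_of_infinite_isRoot
    apply hS.mono
    intro z hz
    simp [Polynomial.IsRoot, h z hz]
  have := sub_eq_zero.mp h0
  exact this

lemma coprime_eval {p q : ℂ[X]} (h : IsCoprime p q) (a : ℂ) (hq : q.eval a = 0) :
    p.eval a ≠ 0 := by
  obtain ⟨u, v, huv⟩ := h
  intro hp
  have h1 := congrArg (Polynomial.eval a) huv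
  simp [hp, hq] at h1

lemma ratmap_coprime {f : Sphere → Sphere} (hf : IsRationalMap f) :
    ∃ p q : ℂ[X], q ≠ 0 ∧ IsCoprime p q ∧
      ∀ z : ℂ, q.eval z ≠ 0 → f (OnePoint.some z) = OnePoint.some (p.eval z / q.eval z) := by
  obtain ⟨hc, p, q, hq, hpq⟩ := hf
  set d := GCDMonoid.gcd p q with hd
  have hgne : d ≠ 0 := gcd_ne_zero_of_right hq
  refine ⟨p / d, q / d, right_div_gcd_ne_zero hq, isCoprime_div_gcd_div_gcd hq, ?_⟩
  have hpd : d * (p / d) = p := EuclideanDomain.mul_div_cancel' hgne (gcd_dvd_left p q)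
  have hqd : d * (q / d) = q := EuclideanDomain.mul_div_cancel' hgne (gcd_dvd_right p q)
  have key : ∀ z : ℂ, d.eval z ≠ 0 → (q / d).eval z ≠ 0 →
      f (OnePoint.some z) = OnePoint.some ((p / d).eval z / (q / d).eval z) := by
    intro z hdz hq1z
    have hqz : q.eval z ≠ 0 := by
      rw [← hqd, Polynomial.eval_mul]
      exact mul_ne_zero hdz hq1z
    have e1 : p.eval z = d.eval z * (p / d).eval z := by rw [← Polynomial.eval_mul, hpd]
    have e2 : q.eval z = d.eval z * (q / d).eval z := by rw [← Polynomial.eval_mul, hqd]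
    rw [hpq z hqz, e1, e2, mul_div_mul_left _ _ hdz]
  intro z hq1z
  by_cases hdz : d.eval z ≠ 0
  · exact key z hdz hq1z
  push_neg at hdz
  -- continuity argument
  set S : Set ℂ := {w | d.eval w ≠ 0 ∧ (q / d).eval w ≠ 0} with hS
  have hSfin : Sᶜ.Finite := by
    have : Sᶜ ⊆ {w | d.IsRoot w} ∪ {w | (q / d).IsRoot w} := by
      intro w hw
      simp only [hS, Set.mem_compl_iff, Set.mem_setOf_eq, not_and_or, not_not] at hw
      rcases hw with h1 | h1
      · exact Or.inl h1
      · exact Or.inr h1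
    exact Set.Finite.subset ((Polynomial.finite_setOf_isRoot hgne).union
      (Polynomial.finite_setOf_isRoot (right_div_gcd_ne_zero hq))) this
  have hfil : (𝓝[S] z).NeBot := by
    have := nbot Sᶜ hSfin z
    simpa using this
  have t1 : Filter.Tendsto (fun w => f (OnePoint.some w)) (𝓝[S] z) (𝓝 (f (OnePoint.some z))) :=
    ((hc.comp OnePoint.continuous_coe).continuousAt).tendsto.mono_left nhdsWithin_le_nhds
  have t2 : Filter.Tendsto (fun w => (OnePoint.some ((p / d).eval w / (q / d).eval w) : Sphere))
      (𝓝[S] z) (𝓝 (OnePoint.some ((p / d).eval z / (q / d).eval z))) := by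
    refine Filter.Tendsto.mono_left ?_ nhdsWithin_le_nhds
    exact OnePoint.continuous_coe.continuousAt.comp
      (((p / d).continuous.continuousAt).div ((q / d).continuous.continuousAt) hq1z)
  have te : (fun w => f (OnePoint.some w)) =ᶠ[𝓝[S] z]
      fun w => (OnePoint.some ((p / d).eval w / (q / d).eval w) : Sphere) := by
    filter_upwards [self_mem_nhdsWithin] with w hw
    exact key w hw.1 hw.2
  exact tendsto_nhds_unique (t1.congr' te) t2

lemma not_const {f : Sphere → Sphere} (hcont : Continuous f) (p q : ℂ[X]) (hq : q ≠ 0)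
    (hpq : ∀ z, q.eval z ≠ 0 → f (OnePoint.some z) = OnePoint.some (p.eval z / q.eval z))
    (hnc : Nonconst f) : ∀ c : ℂ, p ≠ Polynomial.C c * q := by
  intro c hc
  have hroots : {w : ℂ | q.IsRoot w}.Finite := Polynomial.finite_setOf_isRoot hq
  have hd : Dense (OnePoint.some '' {w : ℂ | q.IsRoot w}ᶜ : Set Sphere) :=
    dense_sphere _ hroots
  have heq : Set.EqOn f (fun _ => (OnePoint.some c : Sphere))
      (OnePoint.some '' {w : ℂ | q.IsRoot w}ᶜ) := by
    rintro _ ⟨w, hw, rfl⟩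
    have hqw : q.eval w ≠ 0 := hw
    rw [hpq w hqw, hc]
    simp only [Polynomial.eval_mul, Polynomial.eval_C]
    rw [mul_div_assoc, div_self hqw, mul_one]
  have hfc : f = fun _ => (OnePoint.some c : Sphere) :=
    hcont.ext_on hd continuous_const heq
  obtain ⟨z, w, hzw⟩ := hnc
  rw [hfc] at hzw
  exact hzw rfl

end OpenMapping

section OpenMap2

open Polynomial Metric

/-- Choose a radius whose punctured ball avoids a finite set (except possibly the center). -/
lemma avoid_radius (a : ℂ) (T : Set ℂ) (hT : T.Finite) :
    ∃ r > 0, ∀ w ∈ Metric.ball a r, w ≠ a → w ∉ T := by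
  have hcl : IsClosed (T \ {a}) := (hT.subset Set.diff_subset).isClosed
  have ha : a ∈ (T \ {a})ᶜ := by simp
  obtain ⟨r, hr0, hr⟩ := Metric.isOpen_iff.mp hcl.isOpen_compl a ha
  refine ⟨r, hr0, fun w hw hwa hwT => hr hw ⟨hwT, hwa⟩⟩

lemma ratmap_isOpenMap {f : Sphere → Sphere} (hf : IsRationalMap f) (hncst : Nonconst f) :
    IsOpenMap f := by
  have hcont := hf.1
  obtain ⟨p, q, hq, hcop, hpq⟩ := ratmap_coprime hf
  have hnotc : ∀ c : ℂ, p ≠ Polynomial.C c * q := not_const hcont p q hq hpq hncst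
  have hp : p ≠ 0 := fun h => hnotc 0 (by simp [h])
  have key : ∀ x : Sphere, ∀ s ∈ 𝓝 x, f '' s ∈ 𝓝 (f x) := by
    intro x
    induction x using OnePoint.rec with
    | coe a =>
      by_cases hqa : q.eval a = 0
      · -- pole at a
        have hpa : p.eval a ≠ 0 := coprime_eval hcop a hqa
        obtain ⟨r, hr0, hr⟩ := avoid_radius a ({w | p.IsRoot w} ∪ {w | q.IsRoot w})
          ((Polynomial.finite_setOf_isRoot hp).union (Polynomial.finite_setOf_isRoot hq))
        have hpb : ∀ w ∈ Metric.ball a r, p.eval w ≠ 0 := by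
          intro w hw
          by_cases hwa : w = a
          · rwa [hwa]
          · exact fun h => hr w hw hwa (Or.inl h)
        have hqb : ∀ w ∈ Metric.ball a r, w ≠ a → q.eval w ≠ 0 :=
          fun w hw hwa h => hr w hw hwa (Or.inr h)
        apply post_inv
        apply localOpen (continuous_invS.comp hcont) a r hr0
          (fun w => q.eval w / p.eval w)
        · apply DifferentiableOn.analyticOnNhd _ Metric.isOpen_ball
          exact DifferentiableOn.div (q.differentiable.differentiableOn)
            (p.differentiable.differentiableOn) hpb
        · intro c hc
          have hqc : q = Polynomial.C c * p := by
            apply poly_eq_of_eqon (Metric.ball a r \ {a}) (ball_diff_infinite a r hr0)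
            intro w hw
            have h1 := hc w hw.1
            have h2 := hpb w hw.1
            rw [Polynomial.eval_mul, Polynomial.eval_C]
            field_simp at h1 ⊢
            linear_combination h1
          by_cases hc0 : c = 0
          · rw [hc0] at hqc; simp at hqc; exact hq hqc
          · apply hnotc c⁻¹
            rw [hqc]
            rw [← mul_assoc, ← Polynomial.C_mul, inv_mul_cancel₀ hc0]
            simp
        · intro w hw hwa
          have hqw := hqb w hw hwa
          have hpw := hpb w hw
          have hne : p.eval w / q.eval w ≠ 0 := div_ne_zero hpw hqw
          simp only [Function.comp_apply, hpq w hqw]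
          simp [invS, hne, inv_div]
      · -- regular point
        obtain ⟨r, hr0, hr⟩ := avoid_radius a {w | q.IsRoot w} (Polynomial.finite_setOf_isRoot hq)
        have hqb : ∀ w ∈ Metric.ball a r, w ≠ a → q.eval w ≠ 0 :=
          fun w hw hwa h => hr w hw hwa h
        have hqb' : ∀ w ∈ Metric.ball a r, q.eval w ≠ 0 := by
          intro w hw
          by_cases hwa : w = a
          · rwa [hwa]
          · exact hqb w hw hwa
        apply localOpen hcont a r hr0 (fun w => p.eval w / q.eval w)
        · apply DifferentiableOn.analyticOnNhd _ Metric.isOpen_ball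
          exact DifferentiableOn.div (p.differentiable.differentiableOn)
            (q.differentiable.differentiableOn) hqb'
        · intro c hc
          apply hnotc c
          apply poly_eq_of_eqon (Metric.ball a r \ {a}) (ball_diff_infinite a r hr0)
          intro w hw
          have h1 := hc w hw.1
          have h2 := hqb' w hw.1
          rw [Polynomial.eval_mul, Polynomial.eval_C]
          field_simp at h1 ⊢
          linear_combination h1
        · intro w hw hwa
          exact hpq w (hqb w hw hwa)
    | infty =>
      set M := max p.natDegree q.natDegree with hM
      set P : ℂ[X] := ∑ k ∈ Finset.range (M + 1), Polynomial.C (p.coeff k) * Polynomial.X ^ (M - k) with hP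
      set Q : ℂ[X] := ∑ k ∈ Finset.range (M + 1), Polynomial.C (q.coeff k) * Polynomial.X ^ (M - k) with hQ
      have evalrev : ∀ (u : ℂ[X]), u.natDegree ≤ M → ∀ w : ℂ, w ≠ 0 →
          (∑ k ∈ Finset.range (M + 1), Polynomial.C (u.coeff k) * Polynomial.X ^ (M - k)).eval w
            = w ^ M * u.eval w⁻¹ := by
        intro u hu w hw
        rw [Polynomial.eval_finset_sum]
        rw [Polynomial.eval_eq_sum_range' (lt_of_le_of_lt hu (Nat.lt_succ_self M)), Finset.mul_sum]
        apply Finset.sum_congr rfl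
        intro k hk
        have hkM : k ≤ M := Nat.lt_succ_iff.mp (Finset.mem_range.mp hk)
        rw [Polynomial.eval_mul, Polynomial.eval_C, Polynomial.eval_pow, Polynomial.eval_X]
        have : w ^ M = w ^ (M - k) * w ^ k := by
          rw [← pow_add, Nat.sub_add_cancel hkM]
        rw [this]
        field_simp
        try ring
        rw [inv_pow, mul_assoc, mul_inv_cancel₀ (pow_ne_zero k hw), mul_one]
      have evalP : ∀ w : ℂ, w ≠ 0 → P.eval w = w ^ M * p.eval w⁻¹ :=
        fun w hw => evalrev p (le_max_left _ _) w hw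
      have evalQ : ∀ w : ℂ, w ≠ 0 → Q.eval w = w ^ M * q.eval w⁻¹ :=
        fun w hw => evalrev q (le_max_right _ _) w hw
      have hinf0 : ({w : ℂ | w ≠ 0}).Infinite := by
        have he : {w : ℂ | w ≠ 0} = ({0} : Set ℂ)ᶜ := by ext w; simp
        rw [he]
        exact (Set.finite_singleton 0).infinite_compl
      have hPne : P ≠ 0 := by
        intro hP0
        apply hp
        apply Polynomial.eq_zero_of_infinite_isRoot
        apply hinf0.mono
        intro z hz
        have h1 := evalP z⁻¹ (inv_ne_zero hz)
        rw [hP0, inv_inv] at h1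
        simp only [Polynomial.eval_zero] at h1
        have h2 : (z : ℂ)⁻¹ ^ M ≠ 0 := pow_ne_zero _ (inv_ne_zero hz)
        simp only [Polynomial.IsRoot, Set.mem_setOf_eq]
        exact (mul_eq_zero.mp h1.symm).resolve_left h2
      have hQne : Q ≠ 0 := by
        intro hQ0
        apply hq
        apply Polynomial.eq_zero_of_infinite_isRoot
        apply hinf0.mono
        intro z hz
        have h1 := evalQ z⁻¹ (inv_ne_zero hz)
        rw [hQ0, inv_inv] at h1
        simp only [Polynomial.eval_zero] at h1
        have h2 : (z : ℂ)⁻¹ ^ M ≠ 0 := pow_ne_zero _ (inv_ne_zero hz)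
        simp only [Polynomial.IsRoot, Set.mem_setOf_eq]
        exact (mul_eq_zero.mp h1.symm).resolve_left h2
      have hPQnotc : ∀ c : ℂ, P ≠ Polynomial.C c * Q := by
        intro c hc
        apply hnotc c
        apply poly_eq_of_eqon {w : ℂ | w ≠ 0} hinf0
        intro z hz
        have hz' : (z : ℂ) ≠ 0 := hz
        have h1 := evalP z⁻¹ (inv_ne_zero hz')
        have h2 := evalQ z⁻¹ (inv_ne_zero hz')
        rw [inv_inv] at h1 h2
        have h3 : P.eval z⁻¹ = c * Q.eval z⁻¹ := by
          rw [hc, Polynomial.eval_mul, Polynomial.eval_C]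
        rw [h1, h2] at h3
        have h4 : (z : ℂ)⁻¹ ^ M ≠ 0 := pow_ne_zero _ (inv_ne_zero hz')
        rw [Polynomial.eval_mul, Polynomial.eval_C]
        field_simp at h3 ⊢
        linear_combination h3
      have hbase : ∀ w : ℂ, w ≠ 0 → Q.eval w ≠ 0 →
          f (invS (OnePoint.some w)) = OnePoint.some (P.eval w / Q.eval w) := by
        intro w hw hQw
        have hqi : q.eval w⁻¹ ≠ 0 := by
          intro h
          apply hQw
          rw [evalQ w hw, h, mul_zero]
        have : invS (OnePoint.some w) = OnePoint.some w⁻¹ := by simp [invS, hw]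
        rw [this, hpq _ hqi, evalP w hw, evalQ w hw,
          mul_div_mul_left _ _ (pow_ne_zero M hw)]
      have hinvinf : invS (∞ : Sphere) = OnePoint.some (0 : ℂ) := rfl
      have eval0 : ∀ u : ℂ[X],
          (∑ k ∈ Finset.range (M + 1), Polynomial.C (u.coeff k) * Polynomial.X ^ (M - k)).eval 0
            = u.coeff M := by
        intro u
        rw [Polynomial.eval_finset_sum, Finset.sum_eq_single M]
        · simp
        · intro k hk hkM
          have hkM' : k < M := lt_of_le_of_ne (Nat.lt_succ_iff.mp (Finset.mem_range.mp hk)) hkM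
          rw [Polynomial.eval_mul, Polynomial.eval_C, Polynomial.eval_pow, Polynomial.eval_X,
            zero_pow (Nat.sub_ne_zero_of_lt hkM'), mul_zero]
        · intro h
          exact absurd (Finset.self_mem_range_succ M) h
      have e1 : P.eval 0 = p.coeff M := eval0 p
      have e2 : Q.eval 0 = q.coeff M := eval0 q
      have hcoeff : p.coeff M ≠ 0 ∨ q.coeff M ≠ 0 := by
        rcases max_choice p.natDegree q.natDegree with hmx | hmx
        · left
          have hMeq : M = p.natDegree := by rw [hM, hmx]
          rw [hMeq, Polynomial.coeff_natDegree]
          exact Polynomial.leadingCoeff_ne_zero.mpr hp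
        · right
          have hMeq : M = q.natDegree := by rw [hM, hmx]
          rw [hMeq, Polynomial.coeff_natDegree]
          exact Polynomial.leadingCoeff_ne_zero.mpr hq
      by_cases hQ0 : Q.eval 0 = 0
      · -- pole at infinity in chart: P.eval 0 ≠ 0
        have hP0 : P.eval 0 ≠ 0 := by
          rw [e1]
          rcases hcoeff with h | h
          · exact h
          · exact absurd (e2.symm.trans hQ0) h
        obtain ⟨r, hr0, hr⟩ := avoid_radius 0 ({w | P.IsRoot w} ∪ {w | Q.IsRoot w})
          ((Polynomial.finite_setOf_isRoot hPne).union (Polynomial.finite_setOf_isRoot hQne))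
        have hPb : ∀ w ∈ Metric.ball (0:ℂ) r, P.eval w ≠ 0 := by
          intro w hw
          by_cases hw0 : w = 0
          · rwa [hw0]
          · exact fun h => hr w hw hw0 (Or.inl h)
        have hQb : ∀ w ∈ Metric.ball (0:ℂ) r, w ≠ 0 → Q.eval w ≠ 0 :=
          fun w hw hw0 h => hr w hw hw0 (Or.inr h)
        have H : ∀ s ∈ 𝓝 (OnePoint.some (0:ℂ)),
            (invS ∘ (f ∘ invS)) '' s ∈ 𝓝 ((invS ∘ (f ∘ invS)) (OnePoint.some (0:ℂ))) := by
          apply localOpen (continuous_invS.comp (hcont.comp continuous_invS)) 0 r hr0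
            (fun w => Q.eval w / P.eval w)
          · apply DifferentiableOn.analyticOnNhd _ Metric.isOpen_ball
            exact DifferentiableOn.div (Q.differentiable.differentiableOn)
              (P.differentiable.differentiableOn) hPb
          · intro c hc
            have hQc : Q = Polynomial.C c * P := by
              apply poly_eq_of_eqon (Metric.ball 0 r \ {0}) (ball_diff_infinite 0 r hr0)
              intro w hw
              have h1 := hc w hw.1
              have h2 := hPb w hw.1
              rw [Polynomial.eval_mul, Polynomial.eval_C]
              field_simp at h1 ⊢
              linear_combination h1
            by_cases hc0 : c = 0
            · rw [hc0] at hQc; simp at hQc; exact hQne hQc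
            · apply hPQnotc c⁻¹
              rw [hQc, ← mul_assoc, ← Polynomial.C_mul, inv_mul_cancel₀ hc0]
              simp
          · intro w hw hw0
            have hQw := hQb w hw hw0
            have hPw := hPb w hw
            have hdne : P.eval w / Q.eval w ≠ 0 := div_ne_zero hPw hQw
            simp only [Function.comp_apply]
            rw [hbase w hw0 hQw]
            simp [invS, hdne, inv_div]
        apply pre_inv
        rw [hinvinf]
        exact post_inv H
      · -- finite value at infinity
        obtain ⟨r, hr0, hr⟩ := avoid_radius 0 {w | Q.IsRoot w} (Polynomial.finite_setOf_isRoot hQne)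
        have hQb : ∀ w ∈ Metric.ball (0:ℂ) r, Q.eval w ≠ 0 := by
          intro w hw
          by_cases hw0 : w = 0
          · rwa [hw0]
          · exact fun h => hr w hw hw0 h
        have H : ∀ s ∈ 𝓝 (OnePoint.some (0:ℂ)),
            (f ∘ invS) '' s ∈ 𝓝 ((f ∘ invS) (OnePoint.some (0:ℂ))) := by
          apply localOpen (hcont.comp continuous_invS) 0 r hr0
            (fun w => P.eval w / Q.eval w)
          · apply DifferentiableOn.analyticOnNhd _ Metric.isOpen_ball
            exact DifferentiableOn.div (P.differentiable.differentiableOn)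
              (Q.differentiable.differentiableOn) hQb
          · intro c hc
            apply hPQnotc c
            apply poly_eq_of_eqon (Metric.ball 0 r \ {0}) (ball_diff_infinite 0 r hr0)
            intro w hw
            have h1 := hc w hw.1
            have h2 := hQb w hw.1
            rw [Polynomial.eval_mul, Polynomial.eval_C]
            field_simp at h1 ⊢
            linear_combination h1
          · intro w hw hw0
            exact hbase w hw0 (hQb w hw)
        apply pre_inv
        rw [hinvinf]
        exact H
  apply IsOpenMap.of_nhds_le
  intro a t ht
  exact Filter.mem_of_superset (key a _ ht) (Set.image_preimage_subset f t)

end OpenMap2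

section Main

lemma gen_decomp {N : ℕ} {g : Fin N → Sphere → Sphere} {f : Sphere → Sphere}
    (hf : semigroupGen (Set.range g) f) :
    (∃ i, f = g i) ∨ ∃ i h, semigroupGen (Set.range g) h ∧ f = h ∘ g i := by
  induction hf with
  | base f hf =>
    obtain ⟨i, rfl⟩ := hf
    exact Or.inl ⟨i, rfl⟩
  | comp f1 f2 h1 h2 ih1 ih2 =>
    rcases ih2 with ⟨i, rfl⟩ | ⟨i, h, hh, rfl⟩
    · exact Or.inr ⟨i, f1, h1, rfl⟩
    · exact Or.inr ⟨i, f1 ∘ h, semigroupGen.comp _ _ h1 hh, rfl⟩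

/-- Backward self-similarity of the Julia set of a finitely generated
rational semigroup. -/
theorem stmt2 (N : ℕ) (g : Fin N → Sphere → Sphere)
    (hrat : ∀ i, IsRationalMap (g i)) (hnc : ∀ i, Nonconst (g i)) :
    Julia {f | semigroupGen (Set.range g) f} =
      ⋃ i, g i ⁻¹' Julia {f | semigroupGen (Set.range g) f} ∧
    Fatou {f | semigroupGen (Set.range g) f} =
      ⋂ i, g i ⁻¹' Fatou {f | semigroupGen (Set.range g) f} := by
  classical
  set G := {f | semigroupGen (Set.range g) f} with hG
  have gen_mem : ∀ i, g i ∈ G := fun i => semigroupGen.base _ ⟨i, rfl⟩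
  have hFat : Fatou G = ⋂ i, g i ⁻¹' Fatou G := by
    apply Set.Subset.antisymm
    · -- hard direction: uses openness of the generators
      intro z hz
      obtain ⟨U, hUo, hzU, hUn⟩ := hz
      apply Set.mem_iInter.mpr
      intro i
      have hopen : IsOpenMap (g i) := ratmap_isOpenMap (hrat i) (hnc i)
      obtain ⟨C, hCnh, hCcl, hCU⟩ := exists_mem_nhds_isClosed_subset (hUo.mem_nhds hzU)
      refine Set.mem_preimage.mpr ⟨g i '' interior C, hopen _ isOpen_interior,
        ⟨z, mem_interior_iff_mem_nhds.mpr hCnh, rfl⟩, ?_⟩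
      intro F hF
      obtain ⟨φ, hφ, hl, hconv⟩ := hUn (fun n => F n ∘ g i)
        (fun n => semigroupGen.comp _ _ (hF n) (gen_mem i))
      set glim : Sphere → Sphere :=
        (fun w => if hw : ∃ x, x ∈ C ∧ g i x = w then hl hw.choose else ∞) with hglim
      refine ⟨φ, hφ, glim, ?_⟩
      intro K hKV hKc ε hε
      have hK'c : IsCompact (g i ⁻¹' K ∩ C) :=
        ((hKc.isClosed.preimage (hrat i).1).inter hCcl).isCompact
      obtain ⟨n0, hn0⟩ := hconv (g i ⁻¹' K ∩ C) (fun x hx => hCU hx.2) hK'c ε hε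
      refine ⟨n0, fun n hn w hwK => ?_⟩
      have hw : ∃ x, x ∈ C ∧ g i x = w := by
        obtain ⟨x, hx, rfl⟩ := hKV hwK
        exact ⟨x, interior_subset hx, rfl⟩
      have hgw : glim w = hl hw.choose := dif_pos hw
      rw [hgw]
      have hch := hw.choose_spec
      have hmem : hw.choose ∈ g i ⁻¹' K ∩ C :=
        ⟨by rw [Set.mem_preimage, hch.2]; exact hwK, hch.1⟩
      have hfin := hn0 n hn hw.choose hmem
      simpa [hch.2] using hfin
    · -- easy direction: pigeonhole over the finitely many generators
      intro z hz
      rw [Set.mem_iInter] at hz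
      have hU : ∀ i, ∃ U, IsOpen U ∧ g i z ∈ U ∧ NormalOn G U := fun i => hz i
      choose U hUo hUm hUn using hU
      refine ⟨⋂ i, g i ⁻¹' U i,
        isOpen_iInter_of_finite (fun i => (hUo i).preimage (hrat i).1),
        Set.mem_iInter.mpr (fun i => hUm i), ?_⟩
      intro F hF
      have hdec : ∀ n, (∃ i, F n = g i) ∨ ∃ i h, h ∈ G ∧ F n = h ∘ g i :=
        fun n => gen_decomp (hF n)
      by_cases hcase : {n | ∃ i, F n = g i}.Infinite
      · have hpig : ∃ i, {n | F n = g i}.Infinite := by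
          by_contra hfin
          push_neg at hfin
          apply hcase
          have hsub : {n | ∃ i, F n = g i} ⊆ ⋃ i, {n | F n = g i} := by
            rintro n ⟨i, hi⟩
            exact Set.mem_iUnion.mpr ⟨i, hi⟩
          exact Set.Finite.subset (Set.finite_iUnion hfin) hsub
        obtain ⟨i, hi⟩ := hpig
        refine ⟨Nat.nth (· ∈ {n | F n = g i}), Nat.nth_strictMono hi, g i, ?_⟩
        intro K hK hKc ε hε
        refine ⟨0, fun n hn w hw => ?_⟩
        have hmem : F (Nat.nth (· ∈ {n | F n = g i}) n) = g i := Nat.nth_mem_of_infinite hi n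
        rw [hmem, sm_self]
        exact hε
      · have hinf2 : {n | ∃ i h, h ∈ G ∧ F n = h ∘ g i}.Infinite := by
          rw [Set.not_infinite] at hcase
          by_contra hfin
          rw [Set.not_infinite] at hfin
          have hsub : (Set.univ : Set ℕ) ⊆
              {n | ∃ i, F n = g i} ∪ {n | ∃ i h, h ∈ G ∧ F n = h ∘ g i} := fun n _ => hdec n
          exact Set.infinite_univ (Set.Finite.subset (hcase.union hfin) hsub)
        have hpig : ∃ i, {n | ∃ h, h ∈ G ∧ F n = h ∘ g i}.Infinite := by
          by_contra hfin
          push_neg at hfin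
          apply hinf2
          have hsub : {n | ∃ i h, h ∈ G ∧ F n = h ∘ g i} ⊆
              ⋃ i, {n | ∃ h, h ∈ G ∧ F n = h ∘ g i} := by
            rintro n ⟨i, h, hh, he⟩
            exact Set.mem_iUnion.mpr ⟨i, h, hh, he⟩
          exact Set.Finite.subset (Set.finite_iUnion hfin) hsub
        obtain ⟨i, hi⟩ := hpig
        have hφmono : StrictMono (Nat.nth (· ∈ {n | ∃ h, h ∈ G ∧ F n = h ∘ g i})) :=
          Nat.nth_strictMono hi
        have hφmem : ∀ n, ∃ h, h ∈ G ∧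
            F (Nat.nth (· ∈ {n | ∃ h, h ∈ G ∧ F n = h ∘ g i}) n) = h ∘ g i :=
          fun n => Nat.nth_mem_of_infinite hi n
        choose h hhG hhE using hφmem
        obtain ⟨ψ, hψ, hl, hconv⟩ := hUn i h hhG
        refine ⟨Nat.nth (· ∈ {n | ∃ h, h ∈ G ∧ F n = h ∘ g i}) ∘ ψ, hφmono.comp hψ,
          hl ∘ g i, ?_⟩
        intro K hK hKc ε hε
        have hKi : g i '' K ⊆ U i := by
          rintro _ ⟨w, hw, rfl⟩
          exact Set.mem_iInter.mp (hK hw) i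
        obtain ⟨n0, hn0⟩ := hconv (g i '' K) hKi (hKc.image (hrat i).1) ε hε
        refine ⟨n0, fun n hn w hw => ?_⟩
        have hfin := hn0 n hn (g i w) ⟨w, hw, rfl⟩
        rw [Function.comp_apply, hhE (ψ n)]
        exact hfin
  refine ⟨?_, hFat⟩
  show (Fatou G)ᶜ = ⋃ i, g i ⁻¹' (Fatou G)ᶜ
  calc (Fatou G)ᶜ = (⋂ i, g i ⁻¹' Fatou G)ᶜ := by rw [← hFat]
    _ = ⋃ i, (g i ⁻¹' Fatou G)ᶜ := by rw [Set.compl_iInter]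
    _ = ⋃ i, g i ⁻¹' (Fatou G)ᶜ := by simp [Set.preimage_compl]

end Main
end

section
/- If g is a Möbius transformation, then the Lipschitz constant of g with respect to the spherical metric equals the Lipschitz constant of g⁻¹, i.e., Lip g = Lip g⁻¹. -/
open OnePoint Filter Topology Set

/-- The Lipschitz constant of a self-map of the sphere with respect to the
spherical metric. -/
noncomputable def lipConst (f : Sphere → Sphere) : ℝ :=
  sInf {M : ℝ | ∀ z w : Sphere, sm (f z) (f w) ≤ M * sm z w}

namespace Stmt4Aux

noncomputable def nn (p q : ℂ) : ℝ := Real.sqrt (‖p‖ ^ 2 + ‖q‖ ^ 2)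

noncomputable def dd (p q r s : ℂ) : ℝ := ‖p * s - q * r‖

noncomputable def L : Sphere → ℂ × ℂ
  | OnePoint.some z => (z, 1)
  | ∞ => (1, 0)

@[simp] lemma L_some (x : ℂ) : L (OnePoint.some x) = (x, 1) := rfl
@[simp] lemma L_inf : L ∞ = (1, 0) := rfl

lemma nn_nonneg (p q : ℂ) : 0 ≤ nn p q := Real.sqrt_nonneg _

lemma dd_nonneg (p q r s : ℂ) : 0 ≤ dd p q r s := norm_nonneg _

lemma nn_pos {p q : ℂ} (h : ¬(p = 0 ∧ q = 0)) : 0 < nn p q := by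
  push_neg at h
  apply Real.sqrt_pos.mpr
  rcases eq_or_ne p 0 with hp | hp
  · have hq := norm_pos_iff.mpr (h hp)
    nlinarith [sq_nonneg (‖p‖)]
  · have hp' := norm_pos_iff.mpr hp
    nlinarith [sq_nonneg (‖q‖)]

lemma L_ne_zero (z : Sphere) : ¬((L z).1 = 0 ∧ (L z).2 = 0) := by
  cases z <;> simp [L, OnePoint.infty]

lemma dd_le (p q r s : ℂ) : dd p q r s ≤ nn p q * nn r s := by
  have h1 : dd p q r s ≤ ‖p‖ * ‖s‖ + ‖q‖ * ‖r‖ := by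
    rw [dd]
    calc ‖p * s - q * r‖ ≤ ‖p * s‖ + ‖q * r‖ := by
          simpa using norm_sub_le (p * s) (q * r)
      _ = _ := by rw [norm_mul, norm_mul]
  have h2 : dd p q r s ^ 2 ≤ (‖p‖ ^ 2 + ‖q‖ ^ 2) *
      (‖r‖ ^ 2 + ‖s‖ ^ 2) := by
    nlinarith [dd_nonneg p q r s, norm_nonneg p, norm_nonneg q,
      norm_nonneg r, norm_nonneg s,
      sq_nonneg (‖p‖ * ‖r‖ - ‖q‖ * ‖s‖)]
  calc dd p q r s = Real.sqrt (dd p q r s ^ 2) := (Real.sqrt_sq (dd_nonneg p q r s)).symm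
    _ ≤ Real.sqrt ((‖p‖ ^ 2 + ‖q‖ ^ 2) *
        (‖r‖ ^ 2 + ‖s‖ ^ 2)) := Real.sqrt_le_sqrt h2
    _ = nn p q * nn r s := Real.sqrt_mul (by positivity) _

lemma dd_A (a b c d p q r s : ℂ) :
    dd (a*p+b*q) (c*p+d*q) (a*r+b*s) (c*r+d*s) = ‖a*d - b*c‖ * dd p q r s := by
  rw [dd, dd, ← norm_mul]
  congr 1
  ring

lemma dd_C_self (p q : ℂ) :
    dd p q (-(starRingEnd ℂ) q) ((starRingEnd ℂ) p) = nn p q ^ 2 := by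
  have key : p * (starRingEnd ℂ) p - q * -(starRingEnd ℂ) q
      = ((Complex.normSq p + Complex.normSq q : ℝ) : ℂ) := by
    rw [show q * -(starRingEnd ℂ) q = -(q * (starRingEnd ℂ) q) by ring,
      Complex.mul_conj, Complex.mul_conj]
    push_cast; ring
  have hnn : (0:ℝ) ≤ Complex.normSq p + Complex.normSq q :=
    add_nonneg (Complex.normSq_nonneg _) (Complex.normSq_nonneg _)
  rw [dd, key, Complex.norm_real, Real.norm_eq_abs, abs_of_nonneg hnn, nn,
    Real.sq_sqrt (by positivity), Complex.sq_norm, Complex.sq_norm]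

lemma dd_C_C (p q r s : ℂ) :
    dd (-(starRingEnd ℂ) q) ((starRingEnd ℂ) p) (-(starRingEnd ℂ) s) ((starRingEnd ℂ) r)
      = dd p q r s := by
  rw [dd, dd, show -(starRingEnd ℂ) q * (starRingEnd ℂ) r
      - (starRingEnd ℂ) p * -(starRingEnd ℂ) s = (starRingEnd ℂ) (p * s - q * r) by
    rw [map_sub, map_mul, map_mul]; ring]
  exact Complex.norm_conj _

lemma nn_C (p q : ℂ) : nn (-(starRingEnd ℂ) q) ((starRingEnd ℂ) p) = nn p q := by
  rw [nn, nn, norm_neg, Complex.norm_conj, Complex.norm_conj, add_comm]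

lemma C_ne_zero {p q : ℂ} (h : ¬(p = 0 ∧ q = 0)) :
    ¬(-(starRingEnd ℂ) q = 0 ∧ (starRingEnd ℂ) p = 0) := by
  simp only [neg_eq_zero, map_eq_zero]
  tauto

lemma A_ne_zero {a b c d : ℂ} (hD : a*d - b*c ≠ 0) {p q : ℂ} (h : ¬(p = 0 ∧ q = 0)) :
    ¬(a*p+b*q = 0 ∧ c*p+d*q = 0) := by
  rintro ⟨h1, h2⟩
  apply h
  constructor
  · have hp : (a*d - b*c) * p = d*(a*p+b*q) - b*(c*p+d*q) := by ring
    rw [h1, h2] at hp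
    rcases (by simpa using hp : a * d - b * c = 0 ∨ p = 0) with h' | h'
    · exact absurd h' hD
    · exact h' 
  · have hq : (a*d - b*c) * q = a*(c*p+d*q) - c*(a*p+b*q) := by ring
    rw [h1, h2] at hq
    rcases (by simpa using hq : a * d - b * c = 0 ∨ q = 0) with h' | h'
    · exact absurd h' hD
    · exact h' 

lemma nn_scale (t p q : ℂ) : nn (t*p) (t*q) = ‖t‖ * nn p q := by
  rw [nn, nn, norm_mul, norm_mul, mul_pow, mul_pow, ← mul_add,
    Real.sqrt_mul (by positivity), Real.sqrt_sq (norm_nonneg t)]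

lemma dd_scale (t u p q r s : ℂ) :
    dd (t*p) (t*q) (u*r) (u*s) = ‖t‖ * ‖u‖ * dd p q r s := by
  rw [dd, dd, ← norm_mul, ← norm_mul, show t*p*(u*s) - t*q*(u*r) = t*u*(p*s - q*r) by ring,
    norm_mul]

lemma scale_quot (α P1 P2 k1 k2 : ℝ) (hk1 : 0 < k1) (hk2 : 0 < k2) :
    2 * (k1 * k2 * α) / (k1 * P1 * (k2 * P2)) = 2 * α / (P1 * P2) := by
  rw [show k1 * P1 * (k2 * P2) = k1 * k2 * (P1 * P2) by ring,
    show 2 * (k1 * k2 * α) = k1 * k2 * (2 * α) by ring,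
    mul_div_mul_left _ _ (by positivity)]

lemma sm_eq (z w : Sphere) :
    sm z w = 2 * dd (L z).1 (L z).2 (L w).1 (L w).2 / (nn (L z).1 (L z).2 * nn (L w).1 (L w).2) := by
  have hL : L (none : Sphere) = ((1:ℂ), (0:ℂ)) := rfl
  have hLs : ∀ x : ℂ, L (Option.some x : Sphere) = (x, (1:ℂ)) := fun _ => rfl
  cases z with
  | none =>
    cases w with
    | none =>
      show (0:ℝ) = _
      rw [hL]
      simp [dd, nn]
    | some y =>
      show 2 / Real.sqrt (1 + ‖y‖ ^ 2) = _
      rw [hL, hLs]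
      rw [dd, nn, nn]
      simp only [one_mul, zero_mul, sub_zero, norm_one, one_pow, norm_zero]
      norm_num
      rw [add_comm]
  | some x =>
    cases w with
    | none =>
      show 2 / Real.sqrt (1 + ‖x‖ ^ 2) = _
      rw [hL, hLs]
      rw [dd, nn, nn]
      simp only [mul_zero, one_mul, zero_sub, norm_neg, norm_one, one_pow, norm_zero]
      norm_num
      rw [add_comm]
    | some y =>
      show 2 * ‖x - y‖ / Real.sqrt ((1 + ‖x‖ ^ 2) * (1 + ‖y‖ ^ 2)) = _
      rw [hLs, hLs, dd, nn, nn, norm_one, ← Real.sqrt_mul (by positivity)]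
      norm_num
      rw [show (1 + ‖x‖ ^ 2) * (1 + ‖y‖ ^ 2)
        = (‖x‖ ^ 2 + 1) * (‖y‖ ^ 2 + 1) by ring]

end Stmt4Aux

namespace Stmt4Aux

/-- The heart of the argument: if the inverse direction Lipschitz inequality holds
(in homogeneous-coordinate quotient form), then the forward one holds. Uses the
2×2 determinant identity `s_min * s_max = |det|`. -/
lemma vec_main (a b c d : ℂ) (hD : a * d - b * c ≠ 0) (M : ℝ)
    (H : ∀ p q r s : ℂ, ¬(p = 0 ∧ q = 0) → ¬(r = 0 ∧ s = 0) →
      2 * dd p q r s / (nn p q * nn r s) ≤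
        M * (2 * (‖a*d - b*c‖ * dd p q r s) /
          (nn (a*p+b*q) (c*p+d*q) * nn (a*r+b*s) (c*r+d*s))))
    (p q r s : ℂ) (hv : ¬(p = 0 ∧ q = 0)) (hw : ¬(r = 0 ∧ s = 0)) :
    2 * (‖a*d - b*c‖ * dd p q r s) /
        (nn (a*p+b*q) (c*p+d*q) * nn (a*r+b*s) (c*r+d*s)) ≤
      M * (2 * dd p q r s / (nn p q * nn r s)) := by
  set δ := ‖a*d - b*c‖ with hδdef
  have hδ : 0 < δ := norm_pos_iff.mpr hD
  rcases eq_or_ne (dd p q r s) 0 with hdd | hdd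
  · rw [hdd]
    simp
  have hddpos : 0 < dd p q r s := lt_of_le_of_ne (dd_nonneg _ _ _ _) (Ne.symm hdd)
  have P1 : 0 < nn p q := nn_pos hv
  have P2 : 0 < nn r s := nn_pos hw
  have Q1 : 0 < nn (a*p+b*q) (c*p+d*q) := nn_pos (A_ne_zero hD hv)
  have Q2 : 0 < nn (a*r+b*s) (c*r+d*s) := nn_pos (A_ne_zero hD hw)
  -- conjugate-rotated vectors
  set p' := -(starRingEnd ℂ) q with hp'
  set q' := (starRingEnd ℂ) p with hq'
  set r' := -(starRingEnd ℂ) s with hr'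
  set s' := (starRingEnd ℂ) r with hs'
  have hv' : ¬(p' = 0 ∧ q' = 0) := C_ne_zero hv
  have hw' : ¬(r' = 0 ∧ s' = 0) := C_ne_zero hw
  have R1 : 0 < nn (a*p'+b*q') (c*p'+d*q') := nn_pos (A_ne_zero hD hv')
  have R2 : 0 < nn (a*r'+b*s') (c*r'+d*s') := nn_pos (A_ne_zero hD hw')
  -- F1 : δ * (nn p q)^2 ≤ Q1 * R1
  have F1 : δ * nn p q ^ 2 ≤ nn (a*p+b*q) (c*p+d*q) * nn (a*p'+b*q') (c*p'+d*q') := by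
    calc δ * nn p q ^ 2 = δ * dd p q p' q' := by rw [hp', hq', dd_C_self]
      _ = dd (a*p+b*q) (c*p+d*q) (a*p'+b*q') (c*p'+d*q') := (dd_A a b c d p q p' q').symm
      _ ≤ _ := dd_le _ _ _ _
  have F2 : δ * nn r s ^ 2 ≤ nn (a*r+b*s) (c*r+d*s) * nn (a*r'+b*s') (c*r'+d*s') := by
    calc δ * nn r s ^ 2 = δ * dd r s r' s' := by rw [hr', hs', dd_C_self]
      _ = dd (a*r+b*s) (c*r+d*s) (a*r'+b*s') (c*r'+d*s') := (dd_A a b c d r s r' s').symm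
      _ ≤ _ := dd_le _ _ _ _
  -- H applied to the rotated vectors, turned into product form
  have hdd' : dd p' q' r' s' = dd p q r s := by rw [hp', hq', hr', hs', dd_C_C]
  have hnn1 : nn p' q' = nn p q := by rw [hp', hq', nn_C]
  have hnn2 : nn r' s' = nn r s := by rw [hr', hs', nn_C]
  have H' := H p' q' r' s' hv' hw'
  rw [hdd', hnn1, hnn2, ← mul_div_assoc] at H'
  rw [div_le_div_iff₀ (by positivity) (by positivity)] at H'
  -- H' : 2 * dd p q r s * (R1 * R2) ≤ M * (2 * (δ * dd)) * (nn p q * nn r s)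
  have H'' : nn (a*p'+b*q') (c*p'+d*q') * nn (a*r'+b*s') (c*r'+d*s')
      ≤ M * δ * (nn p q * nn r s) := by
    have h2 : 0 < 2 * dd p q r s := by positivity
    rw [show M * (2 * (δ * dd p q r s)) * (nn p q * nn r s)
        = (2 * dd p q r s) * (M * δ * (nn p q * nn r s)) by ring] at H'
    calc nn (a*p'+b*q') (c*p'+d*q') * nn (a*r'+b*s') (c*r'+d*s')
        = (2 * dd p q r s) * (nn (a*p'+b*q') (c*p'+d*q') * nn (a*r'+b*s') (c*r'+d*s')) / (2 * dd p q r s) := by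
          field_simp
      _ ≤ (2 * dd p q r s) * (M * δ * (nn p q * nn r s)) / (2 * dd p q r s) := by
          exact div_le_div_of_nonneg_right H' h2.le
      _ = M * δ * (nn p q * nn r s) := by field_simp
  -- combine
  have key : δ * (nn p q * nn r s) ≤ M * (nn (a*p+b*q) (c*p+d*q) * nn (a*r+b*s) (c*r+d*s)) := by
    have m1 : (δ * nn p q ^ 2) * (δ * nn r s ^ 2) ≤
        (nn (a*p+b*q) (c*p+d*q) * nn (a*r+b*s) (c*r+d*s)) *
          (nn (a*p'+b*q') (c*p'+d*q') * nn (a*r'+b*s') (c*r'+d*s')) := by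
      calc (δ * nn p q ^ 2) * (δ * nn r s ^ 2)
          ≤ (nn (a*p+b*q) (c*p+d*q) * nn (a*p'+b*q') (c*p'+d*q')) *
            (nn (a*r+b*s) (c*r+d*s) * nn (a*r'+b*s') (c*r'+d*s')) :=
            mul_le_mul F1 F2 (by positivity) (by positivity)
        _ = _ := by ring
    have m2 : (nn (a*p+b*q) (c*p+d*q) * nn (a*r+b*s) (c*r+d*s)) *
          (nn (a*p'+b*q') (c*p'+d*q') * nn (a*r'+b*s') (c*r'+d*s'))
        ≤ (nn (a*p+b*q) (c*p+d*q) * nn (a*r+b*s) (c*r+d*s)) * (M * δ * (nn p q * nn r s)) :=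
      mul_le_mul_of_nonneg_left H'' (by positivity)
    have m3 : (δ * (nn p q * nn r s)) * (δ * (nn p q * nn r s)) ≤
        (M * (nn (a*p+b*q) (c*p+d*q) * nn (a*r+b*s) (c*r+d*s))) * (δ * (nn p q * nn r s)) := by
      nlinarith [m1, m2]
    exact le_of_mul_le_mul_right m3 (by positivity)
  -- back to quotient form
  rw [← mul_div_assoc, div_le_div_iff₀ (by positivity) (by positivity)]
  calc 2 * (δ * dd p q r s) * (nn p q * nn r s)
      = (2 * dd p q r s) * (δ * (nn p q * nn r s)) := by ring
    _ ≤ (2 * dd p q r s) * (M * (nn (a*p+b*q) (c*p+d*q) * nn (a*r+b*s) (c*r+d*s))) :=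
        mul_le_mul_of_nonneg_left key (by positivity)
    _ = M * (2 * dd p q r s) * (nn (a*p+b*q) (c*p+d*q) * nn (a*r+b*s) (c*r+d*s)) := by ring

end Stmt4Aux

namespace Stmt4Aux

/-- At a pole, a continuous Möbius map takes the value `∞`. -/
lemma pole_to_infty {f : Sphere → Sphere} (hc : Continuous f) {a b c d : ℂ}
    (hD : a * d - b * c ≠ 0)
    (hform : ∀ z : ℂ, c * z + d ≠ 0 → f (OnePoint.some z) = OnePoint.some ((a * z + b) / (c * z + d)))
    {x : ℂ} (hx : c * x + d = 0) (hc0 : c ≠ 0) : f (OnePoint.some x) = ∞ := by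
  have hne : a * x + b ≠ 0 := by
    intro h0
    have : (a * d - b * c) = a * (c * x + d) - c * (a * x + b) := by ring
    rw [hx, h0] at this
    simp at this
    exact hD this
  -- the map tends to f (some x) along the punctured neighborhood
  have hcoe : Continuous (OnePoint.some : ℂ → Sphere) := OnePoint.continuous_coe
  have t0 : Tendsto (fun u : ℂ => f (OnePoint.some u)) (𝓝[≠] x) (𝓝 (f (OnePoint.some x))) :=
    ((hc.tendsto _).comp (hcoe.tendsto x)).mono_left nhdsWithin_le_nhds
  have hev : ∀ᶠ u in 𝓝[≠] x, f (OnePoint.some u) = OnePoint.some ((a * u + b) / (c * u + d)) := by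
    filter_upwards [self_mem_nhdsWithin] with u hu
    apply hform
    intro h0
    apply hu
    have : c * (u - x) = 0 := by rw [mul_sub]; rw [show c * u = -d by linear_combination h0, show c * x = -d by linear_combination hx]; ring
    rcases mul_eq_zero.mp this with h | h
    · exact absurd h hc0
    · exact sub_eq_zero.mp h
  have t1 : Tendsto (fun u : ℂ => (OnePoint.some ((a * u + b) / (c * u + d)) : Sphere))
      (𝓝[≠] x) (𝓝 (f (OnePoint.some x))) := t0.congr' hev
  -- the map tends to ∞
  have t2 : Tendsto (fun u : ℂ => (OnePoint.some ((a * u + b) / (c * u + d)) : Sphere))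
      (𝓝[≠] x) (𝓝 ∞) := by
    apply OnePoint.tendsto_coe_infty.comp
    rw [coclosedCompact_eq_cocompact, ← Metric.cobounded_eq_cocompact,
      ← tendsto_norm_atTop_iff_cobounded]
    have hnum : Tendsto (fun u : ℂ => ‖a * u + b‖) (𝓝[≠] x) (𝓝 ‖a * x + b‖) :=
      ((continuous_norm.comp (by continuity)).tendsto x).mono_left nhdsWithin_le_nhds
    have hden0 : Tendsto (fun u : ℂ => ‖c * u + d‖) (𝓝[≠] x) (𝓝[>] 0) := by
      rw [tendsto_nhdsWithin_iff]
      constructor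
      · have : Tendsto (fun u : ℂ => ‖c * u + d‖) (𝓝 x) (𝓝 ‖c * x + d‖) :=
          (continuous_norm.comp (by continuity)).tendsto x
        rw [hx] at this
        simpa using this.mono_left nhdsWithin_le_nhds
      · filter_upwards [self_mem_nhdsWithin] with u hu
        have : c * u + d ≠ 0 := by
          intro h0
          apply hu
          have : c * (u - x) = 0 := by
            rw [mul_sub, show c * u = -d by linear_combination h0,
              show c * x = -d by linear_combination hx]; ring
          rcases mul_eq_zero.mp this with h | h
          · exact absurd h hc0
          · exact sub_eq_zero.mp h
        simpa using this
    have hinv : Tendsto (fun u : ℂ => ‖c * u + d‖⁻¹) (𝓝[≠] x) atTop :=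
      tendsto_inv_nhdsGT_zero.comp hden0
    have := Filter.Tendsto.pos_mul_atTop (norm_pos_iff.mpr hne) hnum hinv
    refine this.congr fun u => ?_
    rw [norm_div]
    ring
  exact tendsto_nhds_unique t1 t2

/-- Homogeneous coordinates for a Möbius map with a two-sided inverse. -/
lemma moebius_coord (f g : Sphere → Sphere) (hf : IsMoebius f)
    (hgf : g ∘ f = id) :
    ∃ a b c d : ℂ, a * d - b * c ≠ 0 ∧ ∀ z : Sphere, ∃ t : ℂ, t ≠ 0 ∧
      (L (f z)).1 = t * (a * (L z).1 + b * (L z).2) ∧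
      (L (f z)).2 = t * (c * (L z).1 + d * (L z).2) := by
  obtain ⟨hc, a, b, c, d, hD, hform⟩ := hf
  have hinj : Function.Injective f :=
    Function.LeftInverse.injective (g := g) (fun x => congrFun hgf x)
  refine ⟨a, b, c, d, hD, ?_⟩
  have hLn : L (none : Sphere) = ((1:ℂ), (0:ℂ)) := rfl
  have hLo : ∀ y : ℂ, L (Option.some y : Sphere) = (y, (1:ℂ)) := fun _ => rfl
  have hcoe : ∀ y : ℂ, (Option.some y : Sphere) = ((y : ℂ) : Sphere) := fun _ => rfl
  have hLi : L (∞ : Sphere) = ((1:ℂ), (0:ℂ)) := rfl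
  have hLc : ∀ y : ℂ, L ((y : ℂ) : Sphere) = (y, (1:ℂ)) := fun _ => rfl
  intro z
  cases z with
  | some x =>
    rcases eq_or_ne (c * x + d) 0 with hx | hx
    · -- pole
      have hc0 : c ≠ 0 := by
        intro h0
        rw [h0, zero_mul, zero_add] at hx
        rw [h0, hx] at hD
        simp at hD
      have hne : a * x + b ≠ 0 := by
        intro h0
        have h1 : (a * d - b * c) = a * (c * x + d) - c * (a * x + b) := by ring
        rw [hx, h0] at h1
        simp at h1
        exact hD h1
      have hfx : f (OnePoint.some x) = ∞ := pole_to_infty hc hD hform hx hc0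
      refine ⟨(a * x + b)⁻¹, inv_ne_zero hne, ?_, ?_⟩
      · rw [hcoe, hfx, hLi, hLc]
        show (1 : ℂ) = _
        simp only [mul_one]
        rw [inv_mul_cancel₀ hne]
      · rw [hcoe, hfx, hLi, hLc]
        show (0 : ℂ) = _
        simp only [mul_one]
        rw [hx, mul_zero]
    · -- regular point
      refine ⟨(c * x + d)⁻¹, inv_ne_zero hx, ?_, ?_⟩
      · rw [hcoe, hform x hx, hLc, hLc]
        show (a * x + b) / (c * x + d) = _
        simp only [mul_one]
        rw [div_eq_mul_inv, mul_comm]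
      · rw [hcoe, hform x hx, hLc, hLc]
        show (1 : ℂ) = _
        simp only [mul_one]
        rw [inv_mul_cancel₀ hx]
  | none =>
    rcases eq_or_ne c 0 with hc0 | hc0
    · -- f ∞ = ∞
      have hd : d ≠ 0 := by
        intro h0; rw [hc0, h0] at hD; simp at hD
      have ha : a ≠ 0 := by
        intro h0; rw [hc0, h0] at hD; simp at hD
      have hfinf : f ∞ = ∞ := by
        cases hfi : f ∞ with
        | none => rfl
        | some y =>
          exfalso
          set u := (y * d - b) / a with hu
          have hcu : c * u + d ≠ 0 := by rw [hc0, zero_mul, zero_add]; exact hd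
          have : f (OnePoint.some u) = OnePoint.some y := by
            rw [hform u hcu, hc0, zero_mul, zero_add, hu]
            congr 1
            field_simp
            ring
          have := hinj (this.trans hfi.symm)
          exact (OnePoint.coe_ne_infty u) (by exact_mod_cast this)
      refine ⟨a⁻¹, inv_ne_zero ha, ?_, ?_⟩
      · show (L (f ∞)).1 = _
        rw [hfinf, hLi, hLn]
        show (1 : ℂ) = _
        simp only [mul_one, mul_zero, add_zero]
        rw [inv_mul_cancel₀ ha]
      · show (L (f ∞)).2 = _
        rw [hfinf, hLi, hLn]
        show (0 : ℂ) = _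
        simp [hc0]
    · -- c ≠ 0 : f ∞ = a / c
      set x₀ := -d / c with hx₀
      have hpole : c * x₀ + d = 0 := by rw [hx₀]; field_simp; ring
      have hfx₀ : f (OnePoint.some x₀) = ∞ := pole_to_infty hc hD hform hpole hc0
      have hfinf : f ∞ = OnePoint.some (a / c) := by
        cases hfi : f ∞ with
        | none =>
          exfalso
          have := hinj (hfx₀.trans hfi.symm)
          exact (OnePoint.coe_ne_infty x₀) this
        | some y =>
          congr 1
          by_contra hy
          have hyc : a - y * c ≠ 0 := by
            intro h0
            apply hy
            field_simp
            linear_combination -h0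
          set u := (y * d - b) / (a - y * c) with hu
          have hcu : c * u + d = (a * d - b * c) / (a - y * c) := by
            rw [hu, mul_div_assoc', div_add' _ _ _ hyc]; congr 1; ring
          have hcu0 : c * u + d ≠ 0 := by
            rw [hcu]; exact div_ne_zero hD hyc
          have hval : (a * u + b) / (c * u + d) = y := by
            rw [hcu, hu]
            field_simp
            ring
          have : f (OnePoint.some u) = OnePoint.some y := by rw [hform u hcu0, hval]
          have := hinj (this.trans hfi.symm)
          exact (OnePoint.coe_ne_infty u) this
      refine ⟨c⁻¹, inv_ne_zero hc0, ?_, ?_⟩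
      · show (L (f ∞)).1 = _
        rw [hfinf, hLc, hLn]
        show a / c = _
        simp only [mul_one, mul_zero, add_zero]
        rw [div_eq_mul_inv, mul_comm]
      · show (L (f ∞)).2 = _
        rw [hfinf, hLc, hLn]
        show (1 : ℂ) = _
        simp only [mul_one, mul_zero, add_zero]
        rw [inv_mul_cancel₀ hc0]

end Stmt4Aux

namespace Stmt4Aux

lemma exists_lift {p q : ℂ} (h : ¬(p = 0 ∧ q = 0)) :
    ∃ (z : Sphere) (t : ℂ), t ≠ 0 ∧ p = t * (L z).1 ∧ q = t * (L z).2 := by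
  rcases eq_or_ne q 0 with hq | hq
  · have hp : p ≠ 0 := fun hp => h ⟨hp, hq⟩
    refine ⟨∞, p, hp, ?_, ?_⟩
    · show p = p * 1; ring
    · show q = p * 0; rw [hq, mul_zero]
  · refine ⟨OnePoint.some (p / q), q, hq, ?_, ?_⟩
    · show p = q * (p / q); field_simp
    · show q = q * 1; ring

lemma half (f g : Sphere → Sphere) (hf : IsMoebius f)
    (hfg : f ∘ g = id) (hgf : g ∘ f = id) (M : ℝ)
    (hM : ∀ z w : Sphere, sm (g z) (g w) ≤ M * sm z w) :
    ∀ z w : Sphere, sm (f z) (f w) ≤ M * sm z w := by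
  obtain ⟨a, b, c, d, hD, hco⟩ := moebius_coord f g hf hgf
  have H0 : ∀ z w : Sphere, sm z w ≤ M * sm (f z) (f w) := by
    intro z w
    have h := hM (f z) (f w)
    rwa [show g (f z) = z from congrFun hgf z, show g (f w) = w from congrFun hgf w] at h
  have smf : ∀ z w : Sphere, sm (f z) (f w) =
      2 * (‖a*d - b*c‖ * dd (L z).1 (L z).2 (L w).1 (L w).2) /
        (nn (a*(L z).1 + b*(L z).2) (c*(L z).1 + d*(L z).2) *
          nn (a*(L w).1 + b*(L w).2) (c*(L w).1 + d*(L w).2)) := by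
    intro z w
    obtain ⟨t, ht, h1, h2⟩ := hco z
    obtain ⟨u, hu, h3, h4⟩ := hco w
    rw [sm_eq (f z) (f w), h1, h2, h3, h4, dd_scale, nn_scale, nn_scale, dd_A,
      scale_quot _ _ _ _ _ (norm_pos_iff.mpr ht) (norm_pos_iff.mpr hu)]
  intro z w
  rw [smf z w, sm_eq z w]
  refine vec_main a b c d hD M ?_ (L z).1 (L z).2 (L w).1 (L w).2 (L_ne_zero z) (L_ne_zero w)
  intro p q r s hv hw
  obtain ⟨z1, t1, ht1, hp, hq⟩ := exists_lift hv
  obtain ⟨z2, t2, ht2, hr, hs⟩ := exists_lift hw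
  have key := H0 z1 z2
  rw [sm_eq z1 z2, smf z1 z2] at key
  rw [hp, hq, hr, hs]
  rw [show a*(t1*(L z1).1) + b*(t1*(L z1).2) = t1*(a*(L z1).1 + b*(L z1).2) by ring,
    show c*(t1*(L z1).1) + d*(t1*(L z1).2) = t1*(c*(L z1).1 + d*(L z1).2) by ring,
    show a*(t2*(L z2).1) + b*(t2*(L z2).2) = t2*(a*(L z2).1 + b*(L z2).2) by ring,
    show c*(t2*(L z2).1) + d*(t2*(L z2).2) = t2*(c*(L z2).1 + d*(L z2).2) by ring,
    dd_scale, nn_scale, nn_scale, nn_scale, nn_scale]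
  rw [scale_quot _ _ _ _ _ (norm_pos_iff.mpr ht1) (norm_pos_iff.mpr ht2),
    show ‖a*d - b*c‖ * (‖t1‖ * ‖t2‖ *
        dd (L z1).1 (L z1).2 (L z2).1 (L z2).2)
      = ‖t1‖ * ‖t2‖ *
        (‖a*d - b*c‖ * dd (L z1).1 (L z1).2 (L z2).1 (L z2).2) by ring,
    scale_quot _ _ _ _ _ (norm_pos_iff.mpr ht1) (norm_pos_iff.mpr ht2)]
  exact key

lemma mob_inv (f g : Sphere → Sphere) (hf : IsMoebius f)
    (hfg : f ∘ g = id) (hgf : g ∘ f = id) : IsMoebius g := by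
  obtain ⟨hc, a, b, c, d, hD, hform⟩ := hf
  constructor
  · let e : Sphere ≃ Sphere := ⟨f, g, fun x => congrFun hgf x, fun x => congrFun hfg x⟩
    exact (Continuous.homeoOfEquivCompactToT2 (f := e) hc).symm.continuous
  · refine ⟨d, -b, -c, a, ?_, ?_⟩
    · intro h0
      apply hD
      linear_combination h0
    · intro z hz
      set w := (d * z + -b) / (-c * z + a) with hw
      have hz' : -(c * z) + a ≠ 0 := by rwa [neg_mul] at hz
      have hz'' : a - z * c ≠ 0 := fun h0 => hz' (by linear_combination h0)
      have hcw : c * w + d = (a * d - b * c) / (-c * z + a) := by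
        rw [hw, eq_div_iff hz]
        field_simp [hz', hz'']
        ring
      have hcw0 : c * w + d ≠ 0 := by rw [hcw]; exact div_ne_zero hD hz
      have hfw : f (OnePoint.some w) = OnePoint.some z := by
        rw [hform w hcw0]
        congr 1
        rw [div_eq_iff hcw0, hcw, hw]
        rw [mul_div_assoc', div_add' _ _ _ hz, mul_div_assoc']
        congr 1
        ring
      calc g (OnePoint.some z) = g (f (OnePoint.some w)) := by rw [hfw]
        _ = OnePoint.some w := congrFun hgf _

end Stmt4Aux


/-- For a Möbius transformation `f` with inverse `g`,
`Lip f = Lip g`. -/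
theorem stmt4 (f g : Sphere → Sphere) (hf : IsMoebius f)
    (hfg : f ∘ g = id) (hgf : g ∘ f = id) :
    lipConst f = lipConst g := by
  have hg : IsMoebius g := Stmt4Aux.mob_inv f g hf hfg hgf
  have key : {M : ℝ | ∀ z w : Sphere, sm (f z) (f w) ≤ M * sm z w}
      = {M : ℝ | ∀ z w : Sphere, sm (g z) (g w) ≤ M * sm z w} := by
    ext M
    simp only [Set.mem_setOf_eq]
    constructor
    · exact fun h => Stmt4Aux.half g f hg hgf hfg M h
    · exact fun h => Stmt4Aux.half f g hf hfg hgf M h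
  unfold lipConst
  rw [key]
end
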